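/- Let σ be the shift y ↦ y+1 on F(y) (F of characteristic zero), let K = u/v ∈ F(y) be σ-reduced with K ≠ 1, and define the F-linear map φ_K : F[y] → F[y] by φ_K(p) = u·σ(p) − v·p. Then φ_K is injective. -/

import Mathlib

open Polynomial

section Aux
variable {F : Type*} [Field F] {τ : Polynomial F ≃ₐ[F] Polynomial F}

theorem natDegree_X_add_one : ((X : F[X]) + 1).natDegree = 1 := by
  simpa using natDegree_X_add_C (1 : F)

theorem leadingCoeff_X_add_one : ((X : F[X]) + 1).leadingCoeff = 1 := by
  simpa using (monic_X_add_C (1 : F)).leadingCoeff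

theorem tau_eq_comp (hτ : τ Polynomial.X = Polynomial.X + 1) (p : F[X]) : τ p = p.comp (X + 1) := by
  have h : (τ : F[X] →ₐ[F] F[X]) = aeval (X + 1 : F[X]) :=
    Polynomial.algHom_ext (by simpa using hτ)
  have := congrArg (fun f : F[X] →ₐ[F] F[X] => f p) h
  simpa [comp_eq_aeval] using this

theorem tau_natDegree (hτ : τ Polynomial.X = Polynomial.X + 1) (p : F[X]) : (τ p).natDegree = p.natDegree := by
  rw [tau_eq_comp hτ, natDegree_comp, natDegree_X_add_one, mul_one]

theorem tau_leadingCoeff (hτ : τ Polynomial.X = Polynomial.X + 1) (p : F[X]) : (τ p).leadingCoeff = p.leadingCoeff := by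
  by_cases h : p.natDegree = 0
  · obtain ⟨a, rfl⟩ := natDegree_eq_zero.mp h
    have : τ (C a) = C a := by
      rw [← Polynomial.algebraMap_eq]; exact AlgEquiv.commutes _ a
    simp [this]
  · rw [tau_eq_comp hτ, leadingCoeff_comp (by rw [natDegree_X_add_one]; exact one_ne_zero),
      leadingCoeff_X_add_one, one_pow, mul_one]

theorem tauPow_natDegree (hτ : τ Polynomial.X = Polynomial.X + 1) (k : ℕ) (p : F[X]) : ((τ ^ k) p).natDegree = p.natDegree := by
  induction k with
  | zero => simp
  | succ n ih => rw [pow_succ', AlgEquiv.mul_apply, tau_natDegree hτ, ih]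

end Aux

theorem key_lemma (F : Type*) [Field F]
    (τ : Polynomial F ≃ₐ[F] Polynomial F) (hτ : τ Polynomial.X = Polynomial.X + 1)
    (u v : Polynomial F) (hv : v ≠ 0) (hcop : IsCoprime u v)
    (hred : ∀ ℓ : ℤ, ℓ ≠ 0 → IsCoprime u ((τ ^ ℓ) v))
    (hK : u ≠ v) :
    ∀ n k : ℕ, ∀ w : F[X], w.natDegree ≤ n → w ≠ 0 → (τ ^ k) u * τ w = v * w → False := by
  have hcopk : ∀ k : ℕ, IsCoprime ((τ ^ k) u) v := by
    intro k
    rcases Nat.eq_zero_or_pos k with rfl | hk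
    · simpa using hcop
    · have h := hred (-(k : ℤ)) (by omega)
      have h2 := h.map ((τ ^ k : Polynomial F ≃ₐ[F] Polynomial F) : Polynomial F →+* Polynomial F)
      have hvv : ((τ ^ k : Polynomial F ≃ₐ[F] Polynomial F) : Polynomial F →+* Polynomial F)
          ((τ ^ (-(k:ℤ))) v) = v := by
        show (τ ^ k) ((τ ^ (-(k:ℤ))) v) = v
        rw [← AlgEquiv.mul_apply, ← zpow_natCast τ k, ← zpow_add]
        simp
      rw [hvv] at h2
      exact h2
  have const_case : ∀ k : ℕ, ∀ w : F[X], w ≠ 0 → (τ ^ k) u * τ w = v * w →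
      u ≠ 0 → u.natDegree = 0 → False := by
    intro k w hw heq hu0 hund
    have hdegeq : u.natDegree + (τ w).natDegree = v.natDegree + w.natDegree := by
      have hku0 : (τ ^ k) u ≠ 0 := fun h0 => hu0 ((map_eq_zero_iff _ (τ ^ k).injective).mp h0)
      have htw : τ w ≠ 0 := fun h0 => hw (by simpa using congrArg τ.symm h0)
      have := congrArg natDegree heq
      rwa [natDegree_mul hku0 htw, natDegree_mul hv hw, tauPow_natDegree hτ] at this
    rw [tau_natDegree hτ] at hdegeq
    have hvnd : v.natDegree = 0 := by omega
    obtain ⟨a, rfl⟩ := natDegree_eq_zero.mp hund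
    obtain ⟨b, rfl⟩ := natDegree_eq_zero.mp hvnd
    have hka : (τ ^ k) (C a) = C a := by
      rw [← Polynomial.algebraMap_eq]; exact AlgEquiv.commutes _ a
    rw [hka] at heq
    have hlc := congrArg leadingCoeff heq
    rw [leadingCoeff_mul, leadingCoeff_mul, tau_leadingCoeff hτ] at hlc
    have hlw : w.leadingCoeff ≠ 0 := leadingCoeff_ne_zero.mpr hw
    have hab : a = b := by
      have : (C a).leadingCoeff = (C b).leadingCoeff := mul_right_cancel₀ hlw hlc
      simpa using this
    exact hK (by rw [hab])
  -- the inductive step, shared by both cases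
  have step : ∀ k : ℕ, ∀ w : F[X], w ≠ 0 → (τ ^ k) u * τ w = v * w →
      u ≠ 0 → u.natDegree ≠ 0 →
      ∃ w₁ : F[X], w₁ ≠ 0 ∧ (τ ^ (k+1)) u * τ w₁ = v * w₁ ∧
        w.natDegree = u.natDegree + w₁.natDegree := by
    intro k w hw heq hu0 hund
    have htw : τ w ≠ 0 := fun h0 => hw (by simpa using congrArg τ.symm h0)
    have hvdvd : v ∣ (τ ^ k) u * τ w := ⟨w, heq⟩
    have hvtw : v ∣ τ w := (hcopk k).symm.dvd_of_dvd_mul_left hvdvd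
    obtain ⟨w₁, hw1⟩ := hvtw
    have hw1ne : w₁ ≠ 0 := by rintro rfl; simp [hw1] at htw
    have hwfac : w = (τ ^ k) u * w₁ := by
      have : v * ((τ ^ k) u * w₁) = v * w := by
        rw [← heq, hw1]; ring
      exact (mul_left_cancel₀ hv this).symm
    have heq1 : (τ ^ (k+1)) u * τ w₁ = v * w₁ := by
      have := congrArg τ hwfac
      rw [hw1, map_mul] at this
      rw [pow_succ', AlgEquiv.mul_apply]
      exact this.symm
    refine ⟨w₁, hw1ne, heq1, ?_⟩
    have hku0 : (τ ^ k) u ≠ 0 := fun h0 => hu0 ((map_eq_zero_iff _ (τ ^ k).injective).mp h0)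
    rw [hwfac, natDegree_mul hku0 hw1ne, tauPow_natDegree hτ]
  intro n
  induction n with
  | zero =>
    intro k w hdeg hw heq
    by_cases hu0 : u = 0
    · rw [hu0, map_zero, zero_mul] at heq
      exact hw (by simpa [hv] using heq.symm)
    by_cases hund : u.natDegree = 0
    · exact const_case k w hw heq hu0 hund
    · obtain ⟨w₁, -, -, hdeg1⟩ := step k w hw heq hu0 hund
      omega
  | succ n ih =>
    intro k w hdeg hw heq
    by_cases hu0 : u = 0
    · rw [hu0, map_zero, zero_mul] at heq
      exact hw (by simpa [hv] using heq.symm)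
    by_cases hund : u.natDegree = 0
    · exact const_case k w hw heq hu0 hund
    · obtain ⟨w₁, hw1ne, heq1, hdeg1⟩ := step k w hw heq hu0 hund
      exact ih (k+1) w₁ (by omega) hw1ne heq1

/-- Shift case: if `K = u/v` is σ-reduced and `K ≠ 1`, the map
`p ↦ u·σ(p) − v·p` on `F[y]` is injective. -/
theorem stmt14 (F : Type*) [Field F] [CharZero F]
    (τ : Polynomial F ≃ₐ[F] Polynomial F) (hτ : τ Polynomial.X = Polynomial.X + 1)
    (u v : Polynomial F) (hv : v ≠ 0) (hcop : IsCoprime u v)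
    (hred : ∀ ℓ : ℤ, ℓ ≠ 0 → IsCoprime u ((τ ^ ℓ) v))
    (hK : u ≠ v) :
    Function.Injective (fun p : Polynomial F => u * τ p - v * p) := by
  intro p q h
  simp only at h
  set w := p - q with hwdef
  have heq : u * τ w = v * w := by
    have := sub_eq_zero.mpr h
    rw [hwdef]
    rw [map_sub]
    ring_nf
    ring_nf at this
    linear_combination this
  by_contra hne
  have hw : w ≠ 0 := sub_ne_zero.mpr fun hpq => hne hpq
  exact key_lemma F τ hτ u v hv hcop hred hK w.natDegree 0 w le_rfl hw
    (by simpa using heq)
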